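/- For any tree T with out-degree at most 2 whose nodes are labelled by characters from {c, ε}, if T contains n ≥ 1 nodes labelled c, then score(T) ≥ log₂(n), where the score is defined recursively by: score of a single ε-leaf is 0; score(node labelled b with single child T₁) = score(T₁) + (1 if b = c else 0); score(node labelled ε with children T₁,…,Tₘ) = max over i of (score(Tᵢ) + (1 if Σ_{j≠i} score(Tⱼ) > 0 else 0)). -/

import Mathlib

inductive LTree (α : Type) : Type
  | node : Option α → List (LTree α) → LTree α

namespace LTree

variable {α : Type} [DecidableEq α]

/-- Number of nodes labelled `c`. -/
def countc (c : α) : LTree α → ℕ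
  | .node b ts =>
    (if b = some c then 1 else 0) + (ts.attach.map (fun t => countc c t.1)).sum
decreasing_by
  have := List.sizeOf_lt_of_mem t.2; simp; omega

/-- The score of a tree with respect to output character `c`. -/
def score (c : α) : LTree α → ℕ
  | .node _ [] => 0
  | .node b [t] => score c t + (if b = some c then 1 else 0)
  | .node _ ts =>
    (ts.attach.map (fun t =>
      score c t.1 +
        (if 0 < (ts.attach.map (fun t => score c t.1)).sum - score c t.1
         then 1 else 0))).foldr max 0
decreasing_by
  all_goals first
    | (have := List.sizeOf_lt_of_mem t.2; simp; omega)
    | (simp; omega)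

/-- Out-degree at most `d`. -/
inductive DegLE (d : ℕ) : LTree α → Prop
  | node : ∀ b ts, ts.length ≤ d → (∀ t ∈ ts, DegLE d t) → DegLE d (.node b ts)

/-- Only nodes with exactly one child may carry a non-ε label. -/
inductive BranchEps : LTree α → Prop
  | node : ∀ (b : Option α) ts, (ts.length ≠ 1 → b = none) →
      (∀ t ∈ ts, BranchEps t) → BranchEps (.node b ts)

/-- `Subtree t' t`: `t'` is the tree rooted at some node of `t`. -/
inductive Subtree : LTree α → LTree α → Prop
  | refl : ∀ t, Subtree t t
  | child : ∀ {t' t : LTree α} (b : Option α) (ts : List (LTree α)),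
      t ∈ ts → Subtree t' t → Subtree t' (.node b ts)

/-- Every root-to-leaf branch has at most `h` edges. -/
inductive HeightLE : ℕ → LTree α → Prop
  | leaf : ∀ h b, HeightLE h (.node b [])
  | node : ∀ h b ts, (∀ t ∈ ts, HeightLE h t) → HeightLE (h + 1) (.node b ts)

end LTree


open LTree

theorem countc_eq {α : Type} [DecidableEq α] (c : α) (b : Option α) (ts : List (LTree α)) :
    countc c (.node b ts) = (if b = some c then 1 else 0) + (ts.map (countc c)).sum := by
  rw [countc]
  congr 1
  rw [← List.attach_map_val (l := ts) (f := countc c)]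

theorem score_two {α : Type} [DecidableEq α] (c : α) (b : Option α) (t1 t2 : LTree α) :
    score c (.node b [t1, t2]) = max (score c t1 + if 0 < score c t2 then 1 else 0)
      (score c t2 + if 0 < score c t1 then 1 else 0) := by
  rw [score] <;> simp [Nat.add_sub_cancel_left]

theorem key {α : Type} [DecidableEq α] (c : α) :
    ∀ (N : ℕ) (T : LTree α), sizeOf T ≤ N → DegLE 2 T → BranchEps T →
      countc c T ≤ 2 ^ score c T ∧ (1 ≤ countc c T → 1 ≤ score c T) := by
  intro N
  induction N with
  | zero => intro T h; cases T with | node b ts => simp at h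
  | succ N ih =>
    rintro ⟨b, ts⟩ hsz hdeg hbr
    cases hdeg with | node _ _ hlen hdeg' => ?_
    cases hbr with | node _ _ hb hbr' => ?_
    have hts : ∀ t ∈ ts, countc c t ≤ 2 ^ score c t ∧ (1 ≤ countc c t → 1 ≤ score c t) := by
      intro t ht
      refine ih t ?_ (hdeg' t ht) (hbr' t ht)
      have := List.sizeOf_lt_of_mem ht
      simp at hsz; omega
    rcases ts with _ | ⟨t1, _ | ⟨t2, _ | ⟨t3, ts'⟩⟩⟩
    · have hb0 : b = none := hb (by simp)
      simp [countc_eq, score, hb0]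
    · obtain ⟨h1, h2⟩ := hts t1 (by simp)
      rw [countc_eq, score]
      simp only [List.map_cons, List.map_nil, List.sum_cons, List.sum_nil, Nat.add_zero]
      have hp : 1 ≤ 2 ^ score c t1 := Nat.one_le_two_pow
      rcases eq_or_ne b (some c) with hbc | hbc <;>
        simp only [if_pos, if_neg, hbc, pow_succ, reduceIte, Nat.add_zero, Nat.zero_add] <;>
        constructor <;> first | omega | (intro h; have := h2 (by omega); omega)
    · have hb0 : b = none := hb (by simp)
      obtain ⟨h1, h2⟩ := hts t1 (by simp)
      obtain ⟨h1', h2'⟩ := hts t2 (by simp)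
      rw [countc_eq, score_two]
      subst hb0
      simp only [List.map_cons, List.map_nil, List.sum_cons, List.sum_nil, Nat.add_zero,
        reduceCtorEq, if_false, Nat.zero_add]
      set s1 := score c t1 with hs1
      set s2 := score c t2 with hs2
      constructor
      · rcases Nat.eq_zero_or_pos s1 with h0 | h0
        · have hc1 : countc c t1 = 0 := by by_contra hc; have := h2 (by omega); omega
          have hmax : s2 ≤ max (s1 + if 0 < s2 then 1 else 0) (s2 + if 0 < s1 then 1 else 0) :=
            le_max_of_le_right (by omega)
          rw [hc1, Nat.zero_add]
          exact le_trans h1' (Nat.pow_le_pow_right (by norm_num) hmax)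
        rcases Nat.eq_zero_or_pos s2 with h0' | h0'
        · have hc2 : countc c t2 = 0 := by by_contra hc; have := h2' (by omega); omega
          have hmax : s1 ≤ max (s1 + if 0 < s2 then 1 else 0) (s2 + if 0 < s1 then 1 else 0) :=
            le_max_of_le_left (by omega)
          rw [hc2, Nat.add_zero]
          exact le_trans h1 (Nat.pow_le_pow_right (by norm_num) hmax)
        · rw [if_pos h0, if_pos h0']
          calc countc c t1 + countc c t2 ≤ 2 ^ s1 + 2 ^ s2 := by omega
            _ ≤ 2 ^ (max s1 s2) + 2 ^ (max s1 s2) := by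
                have a1 := Nat.pow_le_pow_right (show 1 ≤ 2 by norm_num) (le_max_left s1 s2)
                have a2 := Nat.pow_le_pow_right (show 1 ≤ 2 by norm_num) (le_max_right s1 s2)
                omega
            _ = 2 ^ (max s1 s2 + 1) := by ring
            _ ≤ 2 ^ max (s1 + 1) (s2 + 1) := by
                apply Nat.pow_le_pow_right (by norm_num); omega
      · intro h
        have : 1 ≤ countc c t1 ∨ 1 ≤ countc c t2 := by omega
        rcases this with h' | h'
        · have := h2 h'; omega
        · have := h2' h'; omega
    · simp at hlen

open LTree in
theorem stmt0 {α : Type} [DecidableEq α] (c : α) (T : LTree α) (n : ℕ)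
    (hdeg : DegLE 2 T) (hbr : BranchEps T)
    (hn : 1 ≤ n) (hcount : countc c T = n) :
    Real.logb 2 (n : ℝ) ≤ (score c T : ℝ) := by
  have hkey := (key c (sizeOf T) T le_rfl hdeg hbr).1
  have h : (n : ℝ) ≤ (2 : ℝ) ^ (score c T) := by
    rw [← hcount]; exact_mod_cast hkey
  have h2 : Real.logb 2 ((2 : ℝ) ^ (score c T)) = (score c T : ℝ) := by
    rw [Real.logb_pow, Real.logb_self_eq_one] <;> norm_num
  calc Real.logb 2 (n : ℝ) ≤ Real.logb 2 ((2 : ℝ) ^ (score c T)) := by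
        exact Real.logb_le_logb_of_le (by norm_num) (by exact_mod_cast hn) h
    _ = (score c T : ℝ) := h2
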